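/- Let S = N_out^T·N_in − P for a k-regular graph G. Then S·N_in^T = (k−1)·N_out^T. -/
import Mathlib

open Matrix Polynomial Finset

variable {V : Type*} [Fintype V] [DecidableEq V]

/-- Head incidence matrix of the symmetric digraph: entry (v, d) is 1 iff v is the head of d. -/
def Nin (G : SimpleGraph V) : Matrix V G.Dart ℝ :=
  Matrix.of fun v d => if d.snd = v then 1 else 0

/-- Tail incidence matrix: entry (v, d) is 1 iff v is the tail of d. -/
def Nout (G : SimpleGraph V) : Matrix V G.Dart ℝ :=
  Matrix.of fun v d => if d.fst = v then 1 else 0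

/-- Arc-reversal permutation matrix. -/
def Prev (G : SimpleGraph V) : Matrix G.Dart G.Dart ℝ :=
  Matrix.of fun d e => if e = d.symm then 1 else 0

/-- Positive support of a matrix. -/
noncomputable def posSupport {m n : Type*} (M : Matrix m n ℝ) : Matrix m n ℝ :=
  Matrix.of fun i j => if 0 < M i j then 1 else 0

lemma dart_snd_fiber_card (G : SimpleGraph V) [DecidableRel G.Adj] (v : V) :
    #{d : G.Dart | d.snd = v} = G.degree v := by
  rw [← SimpleGraph.dart_fst_fiber_card_eq_degree G v]
  apply Finset.card_bij (fun d _ => d.symm)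
  · intro d hd; simp_all
  · intro a ha b hb h
    exact SimpleGraph.Dart.symm_involutive.injective h
  · intro b hb
    exact ⟨b.symm, by simp_all, by simp⟩

/-- For S = N_out^T N_in - P on a k-regular graph, S * N_in^T = (k-1) N_out^T. -/
theorem stmt7 (G : SimpleGraph V) [DecidableRel G.Adj] (k : ℕ)
    (hreg : G.IsRegularOfDegree k) :
    ((Nout G)ᵀ * Nin G - Prev G) * (Nin G)ᵀ = ((k : ℝ) - 1) • (Nout G)ᵀ := by
  ext d v
  simp only [Matrix.sub_mul, Matrix.sub_apply, Matrix.mul_apply, Matrix.smul_apply,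
    Nin, Nout, Prev, Matrix.transpose_apply, Matrix.of_apply, smul_eq_mul]
  have h1 : ∀ e : G.Dart, (∑ w, (if d.fst = w then (1:ℝ) else 0) * (if e.snd = w then 1 else 0))
      = if e.snd = d.fst then 1 else 0 := by
    intro e
    rw [Finset.sum_eq_single d.fst]
    · simp [eq_comm]
    · intro b _ hb; simp [Ne.symm hb]
    · simp
  simp only [sub_mul, Finset.sum_sub_distrib, h1]
  have h2 : (∑ e : G.Dart, (if e.snd = d.fst then (1:ℝ) else 0) * (if e.snd = v then 1 else 0))
      = if d.fst = v then (k : ℝ) else 0 := by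
    by_cases hv : d.fst = v
    · subst hv
      rw [Finset.sum_congr rfl (g := fun e => if e.snd = d.fst then (1:ℝ) else 0)
        (fun e _ => by by_cases h : e.snd = d.fst <;> simp [h])]
      rw [Finset.sum_boole]
      rw [if_pos rfl]
      norm_cast
      exact dart_snd_fiber_card G d.fst ▸ hreg d.fst
    · rw [Finset.sum_eq_zero, if_neg hv]
      intro e _
      by_cases h : e.snd = d.fst
      · simp [h, fun h2 => hv (h ▸ h2 : d.fst = v)]
        intro h2; exact absurd (h ▸ h2) hv
      · simp [h]
  rw [h2]
  have h3 : (∑ e : G.Dart, (if e = d.symm then (1:ℝ) else 0) * (if e.snd = v then 1 else 0))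
      = if d.fst = v then 1 else 0 := by
    rw [Finset.sum_eq_single d.symm]
    · simp
    · intro b _ hb; simp [hb]
    · simp
  rw [h3]
  by_cases hv : d.fst = v <;> simp [hv]
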